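/- Let α > 0 and let x ∈ ℝ with |x| ≤ α. Then (1/(2α)) · ∫_{−α}^{α} | x − α·sgn(x − t) | dt = α − x²/α. -/

import Mathlib

/-- The sign function: `+1` if `t ≥ 0` and `-1` if `t < 0`. -/
noncomputable def sgn (t : ℝ) : ℝ := if 0 ≤ t then 1 else -1

/-- Dither-expectation computation (equation (22) in the paper):
if `|x| ≤ α`, then `(1/(2α)) ∫_{-α}^{α} |x - α·sgn(x - t)| dt = α - x²/α`. -/
theorem dither_expectation (α x : ℝ) (hα : 0 < α) (hx : |x| ≤ α) :
    (1 / (2 * α)) * (∫ t in (-α)..α, |x - α * sgn (x - t)|) = α - x ^ 2 / α := by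
  obtain ⟨h1, h2⟩ := abs_le.mp hx
  have hfg : ∀ t : ℝ, |x - α * sgn (x - t)| = if t ≤ x then α - x else α + x := by
    intro t
    unfold sgn
    by_cases h : t ≤ x
    · rw [if_pos (by linarith : (0:ℝ) ≤ x - t), if_pos h, mul_one,
        abs_of_nonpos (by linarith)]
      ring
    · rw [if_neg (by push_neg at h; linarith : ¬ (0:ℝ) ≤ x - t), if_neg h]
      rw [mul_neg_one, sub_neg_eq_add, abs_of_nonneg (by linarith)]
      ring
  simp_rw [hfg]
  have hileft : IntervalIntegrable (fun t => if t ≤ x then α - x else α + x)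
      MeasureTheory.volume (-α) x := by
    apply (intervalIntegrable_const (c := α - x)).congr
    intro t ht
    rw [Set.uIoc_of_le (by linarith)] at ht
    simp [ht.2]
  have hiright : IntervalIntegrable (fun t => if t ≤ x then α - x else α + x)
      MeasureTheory.volume x α := by
    apply (intervalIntegrable_const (c := α + x)).congr
    intro t ht
    rw [Set.uIoc_of_le (by linarith)] at ht
    simp [not_le.mpr ht.1]
  rw [← intervalIntegral.integral_add_adjacent_intervals hileft hiright]
  have e1 : (∫ t in (-α)..x, (if t ≤ x then α - x else α + x)) = (α - x) * (x - (-α)) := by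
    rw [intervalIntegral.integral_congr (g := fun _ => α - x)
      (fun t ht => by
        rw [Set.uIcc_of_le (by linarith)] at ht
        simp [ht.2]),
      intervalIntegral.integral_const, smul_eq_mul, mul_comm]
  have e2 : (∫ t in x..α, (if t ≤ x then α - x else α + x)) = (α + x) * (α - x) := by
    rw [intervalIntegral.integral_congr_ae (g := fun _ => α + x) ?_,
      intervalIntegral.integral_const, smul_eq_mul, mul_comm]
    filter_upwards with t ht
    rw [Set.uIoc_of_le (by linarith)] at ht
    simp [not_le.mpr ht.1]
  rw [e1, e2]
  field_simp
  ring
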